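/- Let 0 < r ≤ 1, and suppose c = 1 + sRe^{iθ} with s ∈ [0,1], R ≥ 0, θ ∈ [-π/2, π/2]. If z ∈ ℂ satisfies |z - c| ≤ |c|·r, then for every t ∈ [0,1], |tz + (1-t) - (1 + tsRe^{iθ})| ≤ |1 + tsRe^{iθ}|·r. -/

import Mathlib

open Complex

theorem stmt_17 (r : ℝ) (hr : 0 < r) (hr1 : r ≤ 1) (s R θ : ℝ)
    (hs : s ∈ Set.Icc (0:ℝ) 1) (hR : 0 ≤ R) (hθ : θ ∈ Set.Icc (-(Real.pi / 2)) (Real.pi / 2))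
    (z : ℂ)
    (hz : ‖z - (1 + (s : ℂ) * R * Complex.exp (θ * Complex.I))‖ ≤
      ‖1 + (s : ℂ) * R * Complex.exp (θ * Complex.I)‖ * r) :
    ∀ t ∈ Set.Icc (0:ℝ) 1,
      ‖(t : ℂ) * z + ((1 - t) : ℂ) -
          (1 + (t : ℂ) * s * R * Complex.exp (θ * Complex.I))‖ ≤
        ‖1 + (t : ℂ) * s * R * Complex.exp (θ * Complex.I)‖ * r := by
  rintro t ⟨ht0, ht1⟩
  obtain ⟨hs0, hs1⟩ := hs
  have key : ((t:ℂ) * z + ((1 - t) : ℂ) - (1 + (t : ℂ) * s * R * Complex.exp (θ * Complex.I)))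
      = (t:ℂ) * (z - (1 + (s : ℂ) * R * Complex.exp (θ * Complex.I))) := by
    push_cast; ring
  rw [key, norm_mul, Complex.norm_of_nonneg ht0]
  have hcos : 0 ≤ Real.cos θ := Real.cos_nonneg_of_mem_Icc hθ
  set A := ‖1 + (s : ℂ) * R * Complex.exp (θ * Complex.I)‖ with hA
  set B := ‖1 + (t : ℂ) * s * R * Complex.exp (θ * Complex.I)‖ with hB
  have hA0 : 0 ≤ A := norm_nonneg _
  have hB0 : 0 ≤ B := norm_nonneg _
  have eA : A ^ 2 = (1 + s * R * Real.cos θ) ^ 2 + (s * R * Real.sin θ) ^ 2 := by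
    rw [hA, Complex.sq_norm, Complex.normSq_apply]
    simp [Complex.add_re, Complex.add_im, Complex.mul_re, Complex.mul_im,
      Complex.exp_ofReal_mul_I_re, Complex.exp_ofReal_mul_I_im]
    ring
  have eB : B ^ 2 = (1 + t * s * R * Real.cos θ) ^ 2 + (t * s * R * Real.sin θ) ^ 2 := by
    rw [hB, Complex.sq_norm, Complex.normSq_apply]
    simp [Complex.add_re, Complex.add_im, Complex.mul_re, Complex.mul_im,
      Complex.exp_ofReal_mul_I_re, Complex.exp_ofReal_mul_I_im]
    ring
  have hsq : (t * A) ^ 2 ≤ B ^ 2 := by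
    rw [mul_pow, eA, eB]
    nlinarith [sq_nonneg (s * R * Real.sin θ), mul_nonneg (mul_nonneg hs0 hR) hcos,
      mul_nonneg ht0 (mul_nonneg (mul_nonneg hs0 hR) hcos), sq_nonneg (1 - t)]
  have htA : t * A ≤ B := by
    nlinarith [mul_nonneg ht0 hA0]
  calc t * ‖z - (1 + (s : ℂ) * R * Complex.exp (θ * Complex.I))‖
      ≤ t * (A * r) := by
        exact mul_le_mul_of_nonneg_left hz ht0
    _ = (t * A) * r := by ring
    _ ≤ B * r := mul_le_mul_of_nonneg_right htA hr.le
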